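/- Let 1 < q < 2, r > 0, R > 0 and assume f ∈ wℓ_q(R) ∩ B^r_{2,∞}(R). Then there exists C_q > 0 depending only on q such that for every p ∈ ℕ* and every β > 0, any minimizer f_{p,β} over L1(D_p) of h ↦ ‖f − h‖² + β‖h‖_{L1(D_p)} satisfies ‖f_{p,β}‖_{L1(D_p)} ≤ C_q R^q β^{1−q} and ‖f − f_{p,β}‖ ≤ R (p+1)^{−r} + √(C_q) R^{q/2} β^{1−q/2}. -/

import Mathlib

open MeasureTheory Real

noncomputable section

/-- Membership in the linear span of the truncated dictionary `{φ 0, …, φ (p-1)}`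
(representing `{φ_1, …, φ_p}`). -/
def L1set {H : Type*} [AddCommGroup H] [Module ℝ H] (φ : ℕ → H) (p : ℕ) : Set H :=
  {h | ∃ θ : Fin p → ℝ, h = ∑ j, θ j • φ (j : ℕ)}

/-- The ℓ¹ norm with respect to the truncated dictionary. -/
def l1norm {H : Type*} [AddCommGroup H] [Module ℝ H] (φ : ℕ → H) (p : ℕ) (h : H) : ℝ :=
  sInf {s : ℝ | ∃ θ : Fin p → ℝ, h = ∑ j, θ j • φ (j : ℕ) ∧ s = ∑ j, |θ j|}

/-- Membership in the weak `wℓ_q(R)` ball, in terms of the coefficients on the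
orthonormal basis `φ`. -/
def inwlq {H : Type*} [NormedAddCommGroup H] [InnerProductSpace ℝ H]
    (φ : ℕ → H) (q R : ℝ) (g : H) : Prop :=
  ∀ η : ℝ, 0 < η → {j : ℕ | η < |(inner ℝ (φ j) g : ℝ)|}.Finite ∧
    η ^ q * ({j : ℕ | η < |(inner ℝ (φ j) g : ℝ)|}.ncard : ℝ) ≤ R ^ q

/-- Membership in the Besov ball `B^r_{2,∞}(R)`, in terms of the coefficients on the
orthonormal basis `φ` (here `φ j` stands for `φ_{j+1}`, `j ∈ ℕ`). -/
def inBesov {H : Type*} [NormedAddCommGroup H] [InnerProductSpace ℝ H]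
    (φ : ℕ → H) (r R : ℝ) (g : H) : Prop :=
  ∀ J : ℕ, ((J : ℝ) + 1) ^ (2 * r) *
      (∑' j : ℕ, if J ≤ j then (inner ℝ (φ j) g : ℝ) ^ 2 else 0) ≤ R ^ 2


open Finset

section Aux


-- scalar soft-thresholding facts
lemma scalar_facts {a t β : ℝ} (hβ : 0 < β)
    (hmin : ∀ s : ℝ, (a - t)^2 + β * |t| ≤ (a - s)^2 + β * |s|) :
    |t| ≤ 2 * |a| ∧ (t ≠ 0 → β / 2 < |a|) ∧ (a - t)^2 ≤ β^2 ∧ (|a| ≤ β / 2 → t = 0) := by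
  have h0 := hmin 0
  simp only [sub_zero, abs_zero, mul_zero, add_zero] at h0
  -- h0 : (a - t)^2 + β * |t| ≤ a^2
  have key : t ≠ 0 → β ≤ 2 * |a| - |t| := by
    intro ht
    have htpos : 0 < |t| := abs_pos.mpr ht
    have h1 : β * |t| ≤ 2 * a * t - t ^ 2 := by nlinarith [sq_nonneg (a - t)]
    have h2 : 2 * a * t ≤ 2 * |a| * |t| := by
      have := abs_mul (2 * a) t
      have h3 : 2 * a * t ≤ |2 * a * t| := le_abs_self _
      rw [this, abs_mul] at h3
      simpa [abs_of_nonneg, mul_assoc] using h3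
    have h4 : t ^ 2 = |t| ^ 2 := (sq_abs t).symm
    nlinarith
  have e2 : t ≠ 0 → β / 2 < |a| := by
    intro ht
    have := key ht
    have := abs_pos.mpr ht
    linarith
  refine ⟨?_, e2, ?_, ?_⟩
  · rcases eq_or_ne t 0 with h | h
    · simp [h, abs_nonneg]
    · have := key h; linarith
  · have ha := hmin a
    simp only [sub_self, ne_eq, zero_pow, OfNat.ofNat_ne_zero, not_false_eq_true, zero_add] at ha
    -- ha : (a-t)^2 + β*|t| ≤ β*|a|
    have h5 : (a - t)^2 ≤ β * (|a| - |t|) := by nlinarith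
    have h6 : |a| - |t| ≤ |a - t| := abs_sub_abs_le_abs_sub a t
    have h7 : |a - t|^2 ≤ β * |a - t| := by
      rw [sq_abs]; nlinarith [abs_nonneg (a - t)]
    rcases eq_or_lt_of_le (abs_nonneg (a - t)) with h8 | h8
    · rw [← sq_abs, ← h8]; simpa using sq_nonneg β
    · have : |a - t| ≤ β := by nlinarith
      rw [← sq_abs]; nlinarith [abs_nonneg (a-t)]
  · intro ha
    by_contra ht
    exact absurd (e2 ht) (not_lt.mpr ha)

-- sqrt subadditivity
lemma sqrt_add_le' {x y : ℝ} (hx : 0 ≤ x) (hy : 0 ≤ y) :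
    Real.sqrt (x + y) ≤ Real.sqrt x + Real.sqrt y := by
  rw [show x + y = x + y by ring]
  have h1 := Real.sq_sqrt hx
  have h2 := Real.sq_sqrt hy
  have h3 := Real.sqrt_nonneg x
  have h4 := Real.sqrt_nonneg y
  rw [← Real.sqrt_sq (by positivity : (0:ℝ) ≤ Real.sqrt x + Real.sqrt y)]
  apply Real.sqrt_le_sqrt
  nlinarith




lemma sumA {a : ℕ → ℝ} {q R η : ℝ} (hq1 : 1 < q) (hR : 0 < R) (hη : 0 < η)
    (hcount : ∀ s : ℝ, 0 < s → ({j : ℕ | s < |a j|}).Finite ∧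
      s ^ q * (({j : ℕ | s < |a j|}).ncard : ℝ) ≤ R ^ q)
    (F : Finset ℕ) (hF : ∀ j ∈ F, η < |a j|) :
    ∑ j ∈ F, |a j| ≤ 2 / (1 - 2 ^ (1 - q)) * R ^ q * η ^ (1 - q) := by
  classical
  set x : ℝ := (2 : ℝ) ^ (1 - q) with hxdef
  have hx0 : 0 ≤ x := le_of_lt (Real.rpow_pos_of_pos two_pos _)
  have hx1 : x < 1 := Real.rpow_lt_one_of_one_lt_of_neg one_lt_two (by linarith)
  set K : ℕ → ℕ := fun j => (⌈Real.logb 2 (|a j| / η)⌉ - 1).toNat with hKdef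
  have hKcast : ∀ j ∈ F, ((K j : ℝ)) = (⌈Real.logb 2 (|a j| / η)⌉ : ℝ) - 1 := by
    intro j hj
    have hy : 1 < |a j| / η := (one_lt_div hη).mpr (hF j hj)
    have hlog : 0 < Real.logb 2 (|a j| / η) := Real.logb_pos one_lt_two hy
    have hc : 1 ≤ ⌈Real.logb 2 (|a j| / η)⌉ := Int.ceil_pos.mpr hlog
    have : ((K j : ℕ) : ℤ) = ⌈Real.logb 2 (|a j| / η)⌉ - 1 := Int.toNat_of_nonneg (by omega)
    exact_mod_cast congrArg (Int.cast : ℤ → ℝ) this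
  have hlow : ∀ j ∈ F, η * 2 ^ ((K j : ℝ)) < |a j| := by
    intro j hj
    have hy : 1 < |a j| / η := (one_lt_div hη).mpr (hF j hj)
    have hy0 : 0 < |a j| / η := by linarith
    have h1 : (⌈Real.logb 2 (|a j| / η)⌉ : ℝ) - 1 < Real.logb 2 (|a j| / η) := by
      have := Int.ceil_lt_add_one (Real.logb 2 (|a j| / η)); linarith
    have h2 : (2 : ℝ) ^ ((K j : ℝ)) < 2 ^ Real.logb 2 (|a j| / η) := by
      rw [hKcast j hj]
      exact (Real.rpow_lt_rpow_left_iff one_lt_two).mpr h1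
    rw [Real.rpow_logb two_pos (by norm_num) hy0] at h2
    calc η * 2 ^ ((K j : ℝ)) < η * (|a j| / η) := (mul_lt_mul_iff_right₀ hη).mpr h2
      _ = |a j| := by field_simp
  have hup : ∀ j ∈ F, |a j| ≤ η * 2 ^ ((K j : ℝ) + 1) := by
    intro j hj
    have hy : 1 < |a j| / η := (one_lt_div hη).mpr (hF j hj)
    have hy0 : 0 < |a j| / η := by linarith
    have h1 : Real.logb 2 (|a j| / η) ≤ (K j : ℝ) + 1 := by
      rw [hKcast j hj]
      have := Int.le_ceil (Real.logb 2 (|a j| / η)); linarith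
    have h2 : (2 : ℝ) ^ Real.logb 2 (|a j| / η) ≤ 2 ^ ((K j : ℝ) + 1) :=
      Real.rpow_le_rpow_of_exponent_le (by norm_num) h1
    rw [Real.rpow_logb two_pos (by norm_num) hy0] at h2
    calc |a j| = η * (|a j| / η) := by field_simp
      _ ≤ η * 2 ^ ((K j : ℝ) + 1) := (mul_le_mul_iff_right₀ hη).mpr h2
  set M : ℕ := F.sup K with hMdef
  have hmaps : ∀ j ∈ F, K j ∈ Finset.range (M + 1) := by
    intro j hj
    exact Finset.mem_range.mpr (Nat.lt_succ_of_le (Finset.le_sup hj))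
  -- fiber bound
  have hfiber : ∀ k ∈ Finset.range (M + 1),
      ∑ j ∈ F.filter (fun j => K j = k), |a j| ≤ (2 * (R ^ q * η ^ (1 - q))) * x ^ k := by
    intro k _
    set s : ℝ := η * 2 ^ ((k : ℝ)) with hsdef
    have hs : 0 < s := mul_pos hη (Real.rpow_pos_of_pos two_pos _)
    obtain ⟨hfin, hb⟩ := hcount s hs
    have hsub : F.filter (fun j => K j = k) ⊆ hfin.toFinset := by
      intro j hj
      rw [Finset.mem_filter] at hj
      rw [Set.Finite.mem_toFinset]
      have := hlow j hj.1
      rw [hj.2] at this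
      exact this
    have hcard : ((F.filter (fun j => K j = k)).card : ℝ) ≤ R ^ q / s ^ q := by
      have h1 : (F.filter (fun j => K j = k)).card ≤ hfin.toFinset.card :=
        Finset.card_le_card hsub
      have h2 : (hfin.toFinset.card : ℝ) = (({j : ℕ | s < |a j|}).ncard : ℝ) := by
        rw [Set.ncard_eq_toFinset_card _ hfin]
      have h3 : s ^ q * (hfin.toFinset.card : ℝ) ≤ R ^ q := by rw [h2]; exact hb
      rw [le_div_iff₀ (Real.rpow_pos_of_pos hs q)]
      calc ((F.filter (fun j => K j = k)).card : ℝ) * s ^ q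
          ≤ (hfin.toFinset.card : ℝ) * s ^ q := by
            apply mul_le_mul_of_nonneg_right _ (le_of_lt (Real.rpow_pos_of_pos hs q))
            exact_mod_cast h1
        _ ≤ R ^ q := by linarith
    have hterm : ∀ j ∈ F.filter (fun j => K j = k), |a j| ≤ η * 2 ^ ((k : ℝ) + 1) := by
      intro j hj
      rw [Finset.mem_filter] at hj
      have := hup j hj.1
      rw [hj.2] at this
      exact this
    calc ∑ j ∈ F.filter (fun j => K j = k), |a j|
        ≤ ∑ _j ∈ F.filter (fun j => K j = k), η * 2 ^ ((k : ℝ) + 1) :=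
          Finset.sum_le_sum hterm
      _ = ((F.filter (fun j => K j = k)).card : ℝ) * (η * 2 ^ ((k : ℝ) + 1)) := by
          rw [Finset.sum_const, nsmul_eq_mul]
      _ ≤ (R ^ q / s ^ q) * (η * 2 ^ ((k : ℝ) + 1)) := by
          apply mul_le_mul_of_nonneg_right hcard
          positivity
      _ = (2 * (R ^ q * η ^ (1 - q))) * x ^ k := by
          have e1 : s ^ q = η ^ q * 2 ^ (q * (k : ℝ)) := by
            rw [hsdef, Real.mul_rpow (le_of_lt hη) (le_of_lt (Real.rpow_pos_of_pos two_pos _)),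
              ← Real.rpow_mul (by norm_num : (0:ℝ) ≤ 2), mul_comm (k:ℝ) q]
          have e2 : (2 : ℝ) ^ ((k : ℝ) + 1) = 2 * 2 ^ ((k : ℝ)) := by
            rw [Real.rpow_add two_pos]; simp [mul_comm]
          have e3 : (x : ℝ) ^ k = 2 ^ ((1 - q) * (k : ℝ)) := by
            rw [hxdef, ← Real.rpow_natCast ((2:ℝ) ^ (1 - q)) k,
              ← Real.rpow_mul (by norm_num : (0:ℝ) ≤ 2)]
          have e4 : (2 : ℝ) ^ ((1 - q) * (k : ℝ)) = 2 ^ ((k:ℝ)) / 2 ^ (q * (k : ℝ)) := by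
            rw [← Real.rpow_sub two_pos]; ring_nf
          have e5 : η ^ (1 - q) = η / η ^ q := by
            rw [Real.rpow_sub hη, Real.rpow_one]
          have hηq : (0:ℝ) < η ^ q := Real.rpow_pos_of_pos hη q
          have h2k : (0:ℝ) < 2 ^ ((k:ℝ)) := Real.rpow_pos_of_pos two_pos _
          have h2qk : (0:ℝ) < 2 ^ (q * (k:ℝ)) := Real.rpow_pos_of_pos two_pos _
          rw [e1, e2, e3, e4, e5]
          field_simp
  -- assemble
  have hsplit : ∑ j ∈ F, |a j|
      = ∑ k ∈ Finset.range (M + 1), ∑ j ∈ F.filter (fun j => K j = k), |a j| :=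
    (Finset.sum_fiberwise_of_maps_to hmaps _).symm
  have hgeom : ∑ k ∈ Finset.range (M + 1), x ^ k ≤ (1 - x)⁻¹ := by
    rw [← tsum_geometric_of_lt_one hx0 hx1]
    exact Summable.sum_le_tsum _ (fun i _ => pow_nonneg hx0 i) (summable_geometric_of_lt_one hx0 hx1)
  have hC0 : (0:ℝ) ≤ 2 * (R ^ q * η ^ (1 - q)) := by positivity
  calc ∑ j ∈ F, |a j|
      = ∑ k ∈ Finset.range (M + 1), ∑ j ∈ F.filter (fun j => K j = k), |a j| := hsplit
    _ ≤ ∑ k ∈ Finset.range (M + 1), (2 * (R ^ q * η ^ (1 - q))) * x ^ k :=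
        Finset.sum_le_sum hfiber
    _ = (2 * (R ^ q * η ^ (1 - q))) * ∑ k ∈ Finset.range (M + 1), x ^ k := by
        rw [Finset.mul_sum]
    _ ≤ (2 * (R ^ q * η ^ (1 - q))) * (1 - x)⁻¹ := by
        exact mul_le_mul_of_nonneg_left hgeom hC0
    _ = 2 / (1 - x) * R ^ q * η ^ (1 - q) := by
        field_simp




lemma sumB {a : ℕ → ℝ} {q R η : ℝ} (hq1 : 1 < q) (hq2 : q < 2) (hR : 0 < R) (hη : 0 < η)
    (hcount : ∀ s : ℝ, 0 < s → ({j : ℕ | s < |a j|}).Finite ∧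
      s ^ q * (({j : ℕ | s < |a j|}).ncard : ℝ) ≤ R ^ q)
    (F : Finset ℕ) (hF : ∀ j ∈ F, |a j| ≤ η) :
    ∑ j ∈ F, (a j) ^ 2 ≤ (2:ℝ) ^ q / (1 - 2 ^ (q - 2)) * R ^ q * η ^ (2 - q) := by
  classical
  set x : ℝ := (2 : ℝ) ^ (q - 2) with hxdef
  have hx0 : 0 ≤ x := le_of_lt (Real.rpow_pos_of_pos two_pos _)
  have hx1 : x < 1 := Real.rpow_lt_one_of_one_lt_of_neg one_lt_two (by linarith)
  set F' : Finset ℕ := F.filter (fun j => a j ≠ 0) with hF'def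
  have hsum0 : ∑ j ∈ F, (a j) ^ 2 = ∑ j ∈ F', (a j) ^ 2 := by
    rw [hF'def]
    exact (Finset.sum_filter_of_ne (fun j _ h => by
      intro h0; exact h (by rw [h0]; ring))).symm
  have hpos : ∀ j ∈ F', 0 < |a j| := by
    intro j hj
    rw [hF'def, Finset.mem_filter] at hj
    exact abs_pos.mpr hj.2
  have hle : ∀ j ∈ F', |a j| ≤ η := fun j hj => hF j (Finset.mem_of_mem_filter _ hj)
  set K : ℕ → ℕ := fun j => (-⌈Real.logb 2 (|a j| / η)⌉).toNat with hKdef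
  have hKcast : ∀ j ∈ F', ((K j : ℝ)) = -(⌈Real.logb 2 (|a j| / η)⌉ : ℝ) := by
    intro j hj
    have hy0 : 0 < |a j| / η := div_pos (hpos j hj) hη
    have hy1 : |a j| / η ≤ 1 := (div_le_one hη).mpr (hle j hj)
    have hlog : Real.logb 2 (|a j| / η) ≤ 0 := Real.logb_nonpos one_lt_two (le_of_lt hy0) hy1
    have hc : ⌈Real.logb 2 (|a j| / η)⌉ ≤ 0 := Int.ceil_le.mpr (by exact_mod_cast hlog)
    have : ((K j : ℕ) : ℤ) = -⌈Real.logb 2 (|a j| / η)⌉ := Int.toNat_of_nonneg (by omega)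
    exact_mod_cast congrArg (Int.cast : ℤ → ℝ) this
  have hlow : ∀ j ∈ F', η * 2 ^ (-(K j : ℝ) - 1) < |a j| := by
    intro j hj
    have hy0 : 0 < |a j| / η := div_pos (hpos j hj) hη
    have h1 : -(K j : ℝ) - 1 < Real.logb 2 (|a j| / η) := by
      rw [hKcast j hj]
      have := Int.ceil_lt_add_one (Real.logb 2 (|a j| / η)); linarith
    have h2 : (2 : ℝ) ^ (-(K j : ℝ) - 1) < 2 ^ Real.logb 2 (|a j| / η) :=
      (Real.rpow_lt_rpow_left_iff one_lt_two).mpr h1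
    rw [Real.rpow_logb two_pos (by norm_num) hy0] at h2
    calc η * 2 ^ (-(K j : ℝ) - 1) < η * (|a j| / η) := (mul_lt_mul_iff_right₀ hη).mpr h2
      _ = |a j| := by field_simp
  have hup : ∀ j ∈ F', |a j| ≤ η * 2 ^ (-(K j : ℝ)) := by
    intro j hj
    have hy0 : 0 < |a j| / η := div_pos (hpos j hj) hη
    have h1 : Real.logb 2 (|a j| / η) ≤ -(K j : ℝ) := by
      rw [hKcast j hj]; simpa using Int.le_ceil _
    have h2 : (2 : ℝ) ^ Real.logb 2 (|a j| / η) ≤ 2 ^ (-(K j : ℝ)) :=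
      Real.rpow_le_rpow_of_exponent_le (by norm_num) h1
    rw [Real.rpow_logb two_pos (by norm_num) hy0] at h2
    calc |a j| = η * (|a j| / η) := by field_simp
      _ ≤ η * 2 ^ (-(K j : ℝ)) := (mul_le_mul_iff_right₀ hη).mpr h2
  set M : ℕ := F'.sup K with hMdef
  have hmaps : ∀ j ∈ F', K j ∈ Finset.range (M + 1) := fun j hj =>
    Finset.mem_range.mpr (Nat.lt_succ_of_le (Finset.le_sup hj))
  have hfiber : ∀ k ∈ Finset.range (M + 1),
      ∑ j ∈ F'.filter (fun j => K j = k), (a j) ^ 2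
        ≤ ((2:ℝ) ^ q * (R ^ q * η ^ (2 - q))) * x ^ k := by
    intro k _
    set s : ℝ := η * 2 ^ (-(k : ℝ) - 1) with hsdef
    have hs : 0 < s := mul_pos hη (Real.rpow_pos_of_pos two_pos _)
    obtain ⟨hfin, hb⟩ := hcount s hs
    have hsub : F'.filter (fun j => K j = k) ⊆ hfin.toFinset := by
      intro j hj
      rw [Finset.mem_filter] at hj
      rw [Set.Finite.mem_toFinset]
      have := hlow j hj.1
      rw [hj.2] at this
      exact this
    have hcard : ((F'.filter (fun j => K j = k)).card : ℝ) ≤ R ^ q / s ^ q := by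
      have h1 : (F'.filter (fun j => K j = k)).card ≤ hfin.toFinset.card :=
        Finset.card_le_card hsub
      have h2 : (hfin.toFinset.card : ℝ) = (({j : ℕ | s < |a j|}).ncard : ℝ) := by
        rw [Set.ncard_eq_toFinset_card _ hfin]
      have h3 : s ^ q * (hfin.toFinset.card : ℝ) ≤ R ^ q := by rw [h2]; exact hb
      rw [le_div_iff₀ (Real.rpow_pos_of_pos hs q)]
      calc ((F'.filter (fun j => K j = k)).card : ℝ) * s ^ q
          ≤ (hfin.toFinset.card : ℝ) * s ^ q := by
            apply mul_le_mul_of_nonneg_right _ (le_of_lt (Real.rpow_pos_of_pos hs q))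
            exact_mod_cast h1
        _ ≤ R ^ q := by linarith
    have hterm : ∀ j ∈ F'.filter (fun j => K j = k),
        (a j) ^ 2 ≤ (η * 2 ^ (-(k : ℝ))) ^ 2 := by
      intro j hj
      rw [Finset.mem_filter] at hj
      have h := hup j hj.1
      rw [hj.2] at h
      calc (a j) ^ 2 = |a j| ^ 2 := (sq_abs _).symm
        _ ≤ (η * 2 ^ (-(k : ℝ))) ^ 2 := by
            apply pow_le_pow_left₀ (abs_nonneg _) h
    calc ∑ j ∈ F'.filter (fun j => K j = k), (a j) ^ 2
        ≤ ∑ _j ∈ F'.filter (fun j => K j = k), (η * 2 ^ (-(k : ℝ))) ^ 2 :=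
          Finset.sum_le_sum hterm
      _ = ((F'.filter (fun j => K j = k)).card : ℝ) * (η * 2 ^ (-(k : ℝ))) ^ 2 := by
          rw [Finset.sum_const, nsmul_eq_mul]
      _ ≤ (R ^ q / s ^ q) * (η * 2 ^ (-(k : ℝ))) ^ 2 := by
          apply mul_le_mul_of_nonneg_right hcard
          positivity
      _ = ((2:ℝ) ^ q * (R ^ q * η ^ (2 - q))) * x ^ k := by
          have e1 : s ^ q = η ^ q * 2 ^ (q * (-(k : ℝ) - 1)) := by
            rw [hsdef, Real.mul_rpow (le_of_lt hη) (le_of_lt (Real.rpow_pos_of_pos two_pos _)),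
              ← Real.rpow_mul (by norm_num : (0:ℝ) ≤ 2), mul_comm (-(k:ℝ) - 1) q]
          have e2 : (η * 2 ^ (-(k : ℝ))) ^ 2 = η ^ (2:ℝ) * 2 ^ (-(k:ℝ) * 2) := by
            rw [mul_pow, ← Real.rpow_natCast η 2, ← Real.rpow_natCast ((2:ℝ) ^ (-(k:ℝ))) 2,
              ← Real.rpow_mul (by norm_num : (0:ℝ) ≤ 2)]
            norm_num
          have e3 : (x : ℝ) ^ k = 2 ^ ((q - 2) * (k : ℝ)) := by
            rw [hxdef, ← Real.rpow_natCast ((2:ℝ) ^ (q - 2)) k,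
              ← Real.rpow_mul (by norm_num : (0:ℝ) ≤ 2)]
          have p1 : (2:ℝ) ^ (-(k:ℝ) * 2) / 2 ^ (q * (-(k:ℝ) - 1)) = 2 ^ q * 2 ^ ((q - 2) * (k:ℝ)) := by
            rw [← Real.rpow_sub two_pos, ← Real.rpow_add two_pos]
            ring_nf
          have p2 : η ^ (2:ℝ) / η ^ q = η ^ (2 - q) := by
            rw [← Real.rpow_sub hη]
          have hηq : (0:ℝ) < η ^ q := Real.rpow_pos_of_pos hη q
          have h2a : (0:ℝ) < 2 ^ (q * (-(k:ℝ) - 1)) := Real.rpow_pos_of_pos two_pos _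
          rw [e1, e2, e3]
          calc R ^ q / (η ^ q * 2 ^ (q * (-(k:ℝ) - 1))) * (η ^ (2:ℝ) * 2 ^ (-(k:ℝ) * 2))
              = R ^ q * (η ^ (2:ℝ) / η ^ q) * (2 ^ (-(k:ℝ) * 2) / 2 ^ (q * (-(k:ℝ) - 1))) := by
                field_simp
            _ = R ^ q * η ^ (2 - q) * (2 ^ q * 2 ^ ((q - 2) * (k:ℝ))) := by rw [p1, p2]
            _ = (2:ℝ) ^ q * (R ^ q * η ^ (2 - q)) * 2 ^ ((q - 2) * (k:ℝ)) := by ring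
  have hsplit : ∑ j ∈ F', (a j) ^ 2
      = ∑ k ∈ Finset.range (M + 1), ∑ j ∈ F'.filter (fun j => K j = k), (a j) ^ 2 :=
    (Finset.sum_fiberwise_of_maps_to hmaps _).symm
  have hgeom : ∑ k ∈ Finset.range (M + 1), x ^ k ≤ (1 - x)⁻¹ := by
    rw [← tsum_geometric_of_lt_one hx0 hx1]
    exact Summable.sum_le_tsum _ (fun i _ => pow_nonneg hx0 i) (summable_geometric_of_lt_one hx0 hx1)
  have hC0 : (0:ℝ) ≤ (2:ℝ) ^ q * (R ^ q * η ^ (2 - q)) := by positivity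
  rw [hsum0]
  calc ∑ j ∈ F', (a j) ^ 2
      = ∑ k ∈ Finset.range (M + 1), ∑ j ∈ F'.filter (fun j => K j = k), (a j) ^ 2 := hsplit
    _ ≤ ∑ k ∈ Finset.range (M + 1), ((2:ℝ) ^ q * (R ^ q * η ^ (2 - q))) * x ^ k :=
        Finset.sum_le_sum hfiber
    _ = ((2:ℝ) ^ q * (R ^ q * η ^ (2 - q))) * ∑ k ∈ Finset.range (M + 1), x ^ k := by
        rw [Finset.mul_sum]
    _ ≤ ((2:ℝ) ^ q * (R ^ q * η ^ (2 - q))) * (1 - x)⁻¹ :=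
        mul_le_mul_of_nonneg_left hgeom hC0
    _ = (2:ℝ) ^ q / (1 - x) * R ^ q * η ^ (2 - q) := by
        field_simp




variable {H : Type} [NormedAddCommGroup H] [InnerProductSpace ℝ H] {φ : ℕ → H}

lemma coeffN (hφ : Orthonormal ℝ φ) (S : Finset ℕ) (c : ℕ → ℝ) (i : ℕ) :
    (inner ℝ (φ i) (∑ j ∈ S, c j • φ j) : ℝ) = if i ∈ S then c i else 0 := by
  rw [inner_sum]
  simp only [real_inner_smul_right, orthonormal_iff_ite.mp hφ, mul_ite, mul_one, mul_zero]
  rw [Finset.sum_ite_eq S i c]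

lemma expandN (hφ : Orthonormal ℝ φ) (f : H) (S : Finset ℕ) (c : ℕ → ℝ) :
    ‖f - ∑ j ∈ S, c j • φ j‖ ^ 2
      = ‖f‖ ^ 2 - ∑ j ∈ S, (inner ℝ (φ j) f : ℝ) ^ 2
        + ∑ j ∈ S, ((inner ℝ (φ j) f : ℝ) - c j) ^ 2 := by
  have h1 : (inner ℝ f (∑ j ∈ S, c j • φ j) : ℝ) = ∑ j ∈ S, c j * (inner ℝ (φ j) f : ℝ) := by
    rw [inner_sum]
    refine Finset.sum_congr rfl fun j _ => ?_
    rw [real_inner_smul_right, real_inner_comm]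
  have h2 : ‖∑ j ∈ S, c j • φ j‖ ^ 2 = ∑ j ∈ S, (c j) ^ 2 := by
    rw [← real_inner_self_eq_norm_sq, sum_inner]
    refine Finset.sum_congr rfl fun i hi => ?_
    rw [real_inner_smul_left, coeffN hφ, if_pos hi, sq]
  rw [norm_sub_sq_real, h1, h2]
  have h3 : ∑ j ∈ S, ((inner ℝ (φ j) f : ℝ) - c j) ^ 2
      = ∑ j ∈ S, (inner ℝ (φ j) f : ℝ) ^ 2 - 2 * ∑ j ∈ S, c j * (inner ℝ (φ j) f : ℝ)
        + ∑ j ∈ S, (c j) ^ 2 := by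
    simp only [sub_sq]
    rw [Finset.sum_add_distrib, Finset.sum_sub_distrib, Finset.mul_sum]
    congr 1
    congr 1
    refine Finset.sum_congr rfl fun j _ => by ring
  rw [h3]; ring

lemma parsevalN (hφ : Orthonormal ℝ φ)
    (hdense : (Submodule.span ℝ (Set.range φ)).topologicalClosure = ⊤) (f : H) :
    Summable (fun j => (inner ℝ (φ j) f : ℝ) ^ 2) ∧
      ‖f‖ ^ 2 = ∑' j, (inner ℝ (φ j) f : ℝ) ^ 2 := by
  have hsum : Summable (fun j => (inner ℝ (φ j) f : ℝ) ^ 2) := by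
    refine (Orthonormal.inner_products_summable f hφ).congr fun i => ?_
    rw [Real.norm_eq_abs, sq_abs]
  refine ⟨hsum, le_antisymm ?_ ?_⟩
  · refine le_of_forall_pos_le_add fun ε hε => ?_
    have hf : f ∈ closure ((Submodule.span ℝ (Set.range φ) : Submodule ℝ H) : Set H) := by
      rw [← Submodule.topologicalClosure_coe, hdense]; trivial
    obtain ⟨g, hg, hdist⟩ := Metric.mem_closure_iff.mp hf (Real.sqrt ε) (Real.sqrt_pos.mpr hε)
    obtain ⟨c, hc⟩ := Finsupp.mem_span_range_iff_exists_finsupp.mp hg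
    have hgc : g = ∑ j ∈ c.support, c j • φ j := by
      rw [← hc]; rfl
    have hex := expandN hφ f c.support (fun j => c j)
    rw [← hgc] at hex
    have hfg : ‖f - g‖ ^ 2 < ε := by
      have h0 : ‖f - g‖ < Real.sqrt ε := by rw [← dist_eq_norm]; exact hdist
      have := pow_lt_pow_left₀ h0 (norm_nonneg _) (by norm_num : (2:ℕ) ≠ 0)
      rwa [Real.sq_sqrt hε.le] at this
    have hsle : ∑ j ∈ c.support, (inner ℝ (φ j) f : ℝ) ^ 2
        ≤ ∑' j, (inner ℝ (φ j) f : ℝ) ^ 2 :=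
      Summable.sum_le_tsum _ (fun i _ => sq_nonneg _) hsum
    have hnn : (0:ℝ) ≤ ∑ j ∈ c.support, ((inner ℝ (φ j) f : ℝ) - c j) ^ 2 :=
      Finset.sum_nonneg fun j _ => sq_nonneg _
    nlinarith [sq_nonneg ‖f - g‖]
  · calc ∑' j, (inner ℝ (φ j) f : ℝ) ^ 2
        = ∑' j, ‖(inner ℝ (φ j) f : ℝ)‖ ^ 2 := by
          refine tsum_congr fun j => ?_
          rw [Real.norm_eq_abs, sq_abs]
      _ ≤ ‖f‖ ^ 2 := Orthonormal.tsum_inner_products_le f hφ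




def extendC (p : ℕ) (θ : Fin p → ℝ) : ℕ → ℝ := fun j => if h : j < p then θ ⟨j, h⟩ else 0

variable {H : Type} [NormedAddCommGroup H] [InnerProductSpace ℝ H] {φ : ℕ → H}

lemma coeffN' (hφ : Orthonormal ℝ φ) (S : Finset ℕ) (c : ℕ → ℝ) (i : ℕ) :
    (inner ℝ (φ i) (∑ j ∈ S, c j • φ j) : ℝ) = if i ∈ S then c i else 0 := by
  rw [inner_sum]
  simp only [real_inner_smul_right, orthonormal_iff_ite.mp hφ, mul_ite, mul_one, mul_zero]
  rw [Finset.sum_ite_eq S i c]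

lemma ext_sum (p : ℕ) (θ : Fin p → ℝ) :
    ∑ j : Fin p, θ j • φ (j : ℕ) = ∑ j ∈ Finset.range p, extendC p θ j • φ j := by
  rw [← Fin.sum_univ_eq_sum_range (fun j => extendC p θ j • φ j) p]
  refine Finset.sum_congr rfl fun i _ => ?_
  simp [extendC, i.isLt]

lemma coeffFin (hφ : Orthonormal ℝ φ) {p : ℕ} (θ : Fin p → ℝ) (i : Fin p) :
    (inner ℝ (φ (i : ℕ)) (∑ j : Fin p, θ j • φ (j : ℕ)) : ℝ) = θ i := by
  rw [ext_sum, coeffN' hφ, if_pos (Finset.mem_range.mpr i.isLt)]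
  simp [extendC, i.isLt]

lemma l1norm_eq (hφ : Orthonormal ℝ φ) {p : ℕ} (θ : Fin p → ℝ) :
    l1norm φ p (∑ j : Fin p, θ j • φ (j : ℕ)) = ∑ j : Fin p, |θ j| := by
  have hset : {s : ℝ | ∃ θ' : Fin p → ℝ,
      (∑ j : Fin p, θ j • φ (j : ℕ)) = ∑ j, θ' j • φ (j : ℕ) ∧ s = ∑ j, |θ' j|}
      = {∑ j : Fin p, |θ j|} := by
    ext s
    simp only [Set.mem_setOf_eq, Set.mem_singleton_iff]
    constructor
    · rintro ⟨θ', h1, rfl⟩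
      have : θ' = θ := by
        funext i
        have := congrArg (fun z => (inner ℝ (φ (i : ℕ)) z : ℝ)) h1
        simpa [coeffFin hφ] using this.symm
      rw [this]
    · rintro rfl
      exact ⟨θ, rfl, rfl⟩
  rw [l1norm, hset, csInf_singleton]

lemma expandFin (hφ : Orthonormal ℝ φ) (f : H) {p : ℕ} (θ : Fin p → ℝ) :
    ‖f - ∑ j : Fin p, θ j • φ (j : ℕ)‖ ^ 2
      = ‖f‖ ^ 2 - ∑ j ∈ Finset.range p, (inner ℝ (φ j) f : ℝ) ^ 2
        + ∑ j : Fin p, ((inner ℝ (φ (j : ℕ)) f : ℝ) - θ j) ^ 2 := by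
  rw [ext_sum, expandN hφ f (Finset.range p) (extendC p θ)]
  congr 1
  rw [← Fin.sum_univ_eq_sum_range (fun j => ((inner ℝ (φ j) f : ℝ) - extendC p θ j) ^ 2) p]
  refine Finset.sum_congr rfl fun i _ => ?_
  simp [extendC, i.isLt]

lemma tail_split {g : ℕ → ℝ} (hg : Summable g) (hnn : ∀ j, 0 ≤ g j) (p : ℕ) :
    ∑' j, g j = ∑ j ∈ Finset.range p, g j + ∑' j, if p ≤ j then g j else 0 := by
  classical
  have h1 : Summable (fun j => if p ≤ j then g j else 0) := by
    refine (hg.indicator {j | p ≤ j}).congr fun j => ?_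
    simp [Set.indicator_apply]
  have h2 : Summable (fun j => if p ≤ j then 0 else g j) := by
    refine (hg.indicator {j | ¬ p ≤ j}).congr fun j => ?_
    by_cases h : p ≤ j <;> simp [Set.indicator_apply, h]
  have h3 : ∑' j, g j = ∑' j, ((if p ≤ j then 0 else g j) + (if p ≤ j then g j else 0)) := by
    refine tsum_congr fun j => ?_
    by_cases h : p ≤ j <;> simp [h]
  rw [h3, Summable.tsum_add h2 h1]
  congr 1
  rw [tsum_eq_sum (s := Finset.range p) (fun j hj => by
    rw [if_pos (by simpa using hj)])]
  refine Finset.sum_congr rfl fun j hj => ?_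
  rw [if_neg (by simpa using Finset.mem_range.mp hj)]

end Aux

/-- Bounds on the deterministic Lasso `f_{p,β}` in the orthonormal case for targets
in `wℓ_q(R) ∩ B^r_{2,∞}(R)`. -/
theorem statement_15 :
    ∀ q : ℝ, 1 < q → q < 2 →
    ∃ C : ℝ, 0 < C ∧
      ∀ (r R : ℝ), 0 < r → 0 < R →
      ∀ (H : Type) [NormedAddCommGroup H] [InnerProductSpace ℝ H]
        (φ : ℕ → H), Orthonormal ℝ φ →
        (Submodule.span ℝ (Set.range φ)).topologicalClosure = ⊤ →
      ∀ f : H, inwlq φ q R f → inBesov φ r R f →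
      ∀ (p : ℕ), 1 ≤ p →
      ∀ (β : ℝ), 0 < β →
      ∀ fpβ ∈ L1set φ p,
        (∀ h ∈ L1set φ p,
          ‖f - fpβ‖ ^ 2 + β * l1norm φ p fpβ ≤ ‖f - h‖ ^ 2 + β * l1norm φ p h) →
        l1norm φ p fpβ ≤ C * R ^ q * β ^ (1 - q) ∧
        ‖f - fpβ‖ ≤ R * ((p : ℝ) + 1) ^ (-r) + Real.sqrt C * R ^ (q / 2) * β ^ (1 - q / 2) := by
  intro q hq1 hq2
  have h2q1 : (2:ℝ) ^ (1 - q) < 1 := Real.rpow_lt_one_of_one_lt_of_neg one_lt_two (by linarith)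
  have h2q2 : (2:ℝ) ^ (q - 2) < 1 := Real.rpow_lt_one_of_one_lt_of_neg one_lt_two (by linarith)
  have h2q1' : (0:ℝ) < 2 ^ (1 - q) := Real.rpow_pos_of_pos two_pos _
  have h2q2' : (0:ℝ) < 2 ^ (q - 2) := Real.rpow_pos_of_pos two_pos _
  set CA : ℝ := 2 / (1 - 2 ^ (1 - q)) with hCAdef
  set CB : ℝ := (2:ℝ) ^ q / (1 - 2 ^ (q - 2)) with hCBdef
  have hCApos : 0 < CA := div_pos two_pos (by linarith)
  have hCBpos : 0 < CB := div_pos (Real.rpow_pos_of_pos two_pos q) (by linarith)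
  have h2qpos : (0:ℝ) < 2 ^ q := Real.rpow_pos_of_pos two_pos q
  set C : ℝ := 2 ^ q * CA + (CB * 2 ^ (q - 2) + 2 ^ q) with hCdef
  have hCpos : 0 < C := by positivity
  refine ⟨C, hCpos, ?_⟩
  intro r R hr hR H _ _ φ hφ hdense f hw hB p hp β hβ fpβ hfpβ hmin
  obtain ⟨t, rfl⟩ := hfpβ
  set A : ℕ → ℝ := fun j => (inner ℝ (φ j) f : ℝ) with hA
  have hcount : ∀ s : ℝ, 0 < s → ({j : ℕ | s < |A j|}).Finite ∧
      s ^ q * (({j : ℕ | s < |A j|}).ncard : ℝ) ≤ R ^ q := fun s hs => hw s hs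
  have hb2 : (0:ℝ) < β / 2 := half_pos hβ
  -- per-coordinate minimality
  have hkey : ∀ i : Fin p, ∀ s : ℝ,
      (A (i:ℕ) - t i) ^ 2 + β * |t i| ≤ (A (i:ℕ) - s) ^ 2 + β * |s| := by
    intro i s
    have h' := hmin (∑ j, Function.update t i s j • φ (j:ℕ)) ⟨Function.update t i s, rfl⟩
    rw [expandFin hφ f t, expandFin hφ f (Function.update t i s), l1norm_eq hφ t,
      l1norm_eq hφ (Function.update t i s)] at h'
    have e1 : ∑ j : Fin p, (A (j:ℕ) - t j) ^ 2
        = (A (i:ℕ) - t i) ^ 2 + ∑ j ∈ Finset.univ.erase i, (A (j:ℕ) - t j) ^ 2 :=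
      (Finset.add_sum_erase _ _ (Finset.mem_univ i)).symm
    have e2 : ∑ j : Fin p, |t j| = |t i| + ∑ j ∈ Finset.univ.erase i, |t j| :=
      (Finset.add_sum_erase _ _ (Finset.mem_univ i)).symm
    have e3 : ∑ j : Fin p, (A (j:ℕ) - Function.update t i s j) ^ 2
        = (A (i:ℕ) - s) ^ 2 + ∑ j ∈ Finset.univ.erase i, (A (j:ℕ) - t j) ^ 2 := by
      rw [← Finset.add_sum_erase _ _ (Finset.mem_univ i), Function.update_self]
      congr 1
      exact Finset.sum_congr rfl fun j hj => by
        rw [Function.update_of_ne (Finset.ne_of_mem_erase hj)]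
    have e4 : ∑ j : Fin p, |Function.update t i s j|
        = |s| + ∑ j ∈ Finset.univ.erase i, |t j| := by
      rw [← Finset.add_sum_erase _ _ (Finset.mem_univ i), Function.update_self]
      congr 1
      exact Finset.sum_congr rfl fun j hj => by
        rw [Function.update_of_ne (Finset.ne_of_mem_erase hj)]
    rw [e1, e2, e3, e4] at h'
    nlinarith [h']
  have hfacts := fun i : Fin p => scalar_facts hβ (hkey i)
  -- rpow algebra
  have hhalf1 : (β / 2) ^ (1 - q) = β ^ (1 - q) * 2 ^ (q - 1) := by
    rw [Real.div_rpow hβ.le two_pos.le, div_eq_mul_inv, ← Real.rpow_neg two_pos.le]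
    congr 1
    ring
  have hhalf2 : (β / 2) ^ (2 - q) = β ^ (2 - q) * 2 ^ (q - 2) := by
    rw [Real.div_rpow hβ.le two_pos.le, div_eq_mul_inv, ← Real.rpow_neg two_pos.le]
    congr 1
    ring
  have h2split : (2:ℝ) * 2 ^ (q - 1) = 2 ^ q := by
    nth_rewrite 1 [← Real.rpow_one 2]
    rw [← Real.rpow_add two_pos]
    congr 1
    ring
  have hRq : (0:ℝ) < R ^ q := Real.rpow_pos_of_pos hR q
  have hβ1q : (0:ℝ) < β ^ (1 - q) := Real.rpow_pos_of_pos hβ _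
  have hβ2q : (0:ℝ) < β ^ (2 - q) := Real.rpow_pos_of_pos hβ _
  -- Goal 1 : the l1 bound
  have hgoal1 : l1norm φ p (∑ j, t j • φ (j:ℕ)) ≤ C * R ^ q * β ^ (1 - q) := by
    rw [l1norm_eq hφ t]
    set Fb : Finset (Fin p) := Finset.univ.filter (fun i => t i ≠ 0) with hFb
    have hstep1 : ∑ j : Fin p, |t j| = ∑ j ∈ Fb, |t j| :=
      (Finset.sum_filter_of_ne (fun x _ h => by
        intro h0; exact h (by rw [h0, abs_zero]))).symm
    set FN : Finset ℕ := Fb.image Fin.val with hFN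
    have himg : ∑ j ∈ FN, |A j| = ∑ j ∈ Fb, |A (j:ℕ)| :=
      Finset.sum_image (fun x _ y _ h => Fin.val_injective h)
    have hFNmem : ∀ j ∈ FN, β / 2 < |A j| := by
      intro j hj
      obtain ⟨i, hi, rfl⟩ := Finset.mem_image.mp hj
      exact (hfacts i).2.1 ((Finset.mem_filter.mp hi).2)
    have hsA := sumA hq1 hR hb2 hcount FN hFNmem
    have hstep2 : ∑ j ∈ Fb, |t j| ≤ 2 * ∑ j ∈ FN, |A j| := by
      rw [himg, Finset.mul_sum]
      exact Finset.sum_le_sum fun i _ => (hfacts i).1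
    calc ∑ j : Fin p, |t j| = ∑ j ∈ Fb, |t j| := hstep1
      _ ≤ 2 * ∑ j ∈ FN, |A j| := hstep2
      _ ≤ 2 * (CA * R ^ q * (β / 2) ^ (1 - q)) := by linarith
      _ = (2 ^ q * CA) * R ^ q * β ^ (1 - q) := by
          rw [hhalf1, ← h2split]; ring
      _ ≤ C * R ^ q * β ^ (1 - q) := by
          apply mul_le_mul_of_nonneg_right _ hβ1q.le
          apply mul_le_mul_of_nonneg_right _ hRq.le
          have h1 : 0 < CB * 2 ^ (q - 2) + 2 ^ q := by positivity
          linarith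
  refine ⟨hgoal1, ?_⟩
  -- Goal 2 : the approximation bound
  obtain ⟨hsumm, hpars⟩ := parsevalN hφ hdense f
  set T : ℝ := ∑' j, if p ≤ j then A j ^ 2 else 0 with hT
  set S2 : ℝ := ∑ j : Fin p, (A (j:ℕ) - t j) ^ 2 with hS2
  have hnorm2 : ‖f - ∑ j, t j • φ (j:ℕ)‖ ^ 2 = T + S2 := by
    rw [expandFin hφ f t, hpars, tail_split hsumm (fun j => sq_nonneg _) p, hT, hS2]
    ring
  have hT0 : 0 ≤ T := tsum_nonneg fun j => by positivity
  have hS20 : 0 ≤ S2 := Finset.sum_nonneg fun j _ => sq_nonneg _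
  have hppos : (0:ℝ) < (p:ℝ) + 1 := by positivity
  have hTle : T ≤ R ^ 2 * ((p:ℝ) + 1) ^ (-(2 * r)) := by
    have h1 := hB p
    have h2 : (0:ℝ) < ((p:ℝ) + 1) ^ (2 * r) := Real.rpow_pos_of_pos hppos _
    rw [← le_div_iff₀' h2] at h1
    rw [Real.rpow_neg hppos.le, hT]
    calc (∑' j, if p ≤ j then A j ^ 2 else 0) ≤ R ^ 2 / ((p:ℝ) + 1) ^ (2 * r) := h1
      _ = R ^ 2 * (((p:ℝ) + 1) ^ (2 * r))⁻¹ := by ring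
  -- S2 bound
  have hS2le : S2 ≤ (CB * 2 ^ (q - 2) + 2 ^ q) * R ^ q * β ^ (2 - q) := by
    classical
    set P : Fin p → Prop := fun i => |A (i:ℕ)| ≤ β / 2 with hP
    have hsplit := (Finset.sum_filter_add_sum_filter_not Finset.univ P
      (fun j : Fin p => (A (j:ℕ) - t j) ^ 2)).symm
    -- small part
    set Fs : Finset (Fin p) := Finset.univ.filter P with hFs
    set Fbig : Finset (Fin p) := Finset.univ.filter (fun i => ¬ P i) with hFbig
    have hsmall1 : ∑ j ∈ Fs, (A (j:ℕ) - t j) ^ 2 = ∑ j ∈ Fs, A (j:ℕ) ^ 2 := by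
      refine Finset.sum_congr rfl fun i hi => ?_
      have h0 : t i = 0 := (hfacts i).2.2.2 ((Finset.mem_filter.mp hi).2)
      rw [h0, sub_zero]
    set FNs : Finset ℕ := Fs.image Fin.val with hFNs
    have himgs : ∑ j ∈ FNs, A j ^ 2 = ∑ j ∈ Fs, A (j:ℕ) ^ 2 :=
      Finset.sum_image (fun x _ y _ h => Fin.val_injective h)
    have hFNsmem : ∀ j ∈ FNs, |A j| ≤ β / 2 := by
      intro j hj
      obtain ⟨i, hi, rfl⟩ := Finset.mem_image.mp hj
      exact (Finset.mem_filter.mp hi).2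
    have hsB := sumB hq1 hq2 hR hb2 hcount FNs hFNsmem
    -- big part
    obtain ⟨hfin, hbnd⟩ := hcount (β / 2) hb2
    have hbig1 : ∀ j ∈ Fbig, (A (j:ℕ) - t j) ^ 2 ≤ β ^ 2 :=
      fun i hi => (hfacts i).2.2.1
    have hcard : ((Fbig.card : ℝ)) ≤ R ^ q / (β / 2) ^ q := by
      have hsub : Fbig.image Fin.val ⊆ hfin.toFinset := by
        intro j hj
        obtain ⟨i, hi, rfl⟩ := Finset.mem_image.mp hj
        rw [Set.Finite.mem_toFinset]
        exact lt_of_not_ge ((Finset.mem_filter.mp hi).2)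
      have h1 : Fbig.card = (Fbig.image Fin.val).card :=
        (Finset.card_image_of_injective _ Fin.val_injective).symm
      have h2 : (Fbig.image Fin.val).card ≤ hfin.toFinset.card := Finset.card_le_card hsub
      have h3 : (hfin.toFinset.card : ℝ) = (({j : ℕ | β / 2 < |A j|}).ncard : ℝ) := by
        rw [Set.ncard_eq_toFinset_card _ hfin]
      have hq2pos : (0:ℝ) < (β / 2) ^ q := Real.rpow_pos_of_pos hb2 q
      rw [le_div_iff₀ hq2pos]
      calc ((Fbig.card : ℝ)) * (β / 2) ^ q ≤ (hfin.toFinset.card : ℝ) * (β / 2) ^ q := by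
            apply mul_le_mul_of_nonneg_right _ hq2pos.le
            rw [h1]; exact_mod_cast h2
        _ = (β / 2) ^ q * (({j : ℕ | β / 2 < |A j|}).ncard : ℝ) := by rw [h3]; ring
        _ ≤ R ^ q := hbnd
    have hbig2 : ∑ j ∈ Fbig, (A (j:ℕ) - t j) ^ 2 ≤ (R ^ q / (β / 2) ^ q) * β ^ 2 := by
      calc ∑ j ∈ Fbig, (A (j:ℕ) - t j) ^ 2 ≤ ∑ _j ∈ Fbig, β ^ 2 :=
            Finset.sum_le_sum hbig1
        _ = (Fbig.card : ℝ) * β ^ 2 := by rw [Finset.sum_const, nsmul_eq_mul]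
        _ ≤ (R ^ q / (β / 2) ^ q) * β ^ 2 :=
            mul_le_mul_of_nonneg_right hcard (sq_nonneg β)
    have hbig3 : (R ^ q / (β / 2) ^ q) * β ^ 2 = 2 ^ q * R ^ q * β ^ (2 - q) := by
      have e1 : (β / 2) ^ q = β ^ q / 2 ^ q := Real.div_rpow hβ.le two_pos.le q
      have e2 : (β:ℝ) ^ (2:ℕ) = β ^ (2:ℝ) := by
        rw [← Real.rpow_natCast β 2]; norm_num
      have e3 : β ^ (2:ℝ) / β ^ q = β ^ (2 - q) := by rw [← Real.rpow_sub hβ]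
      have hβq : (0:ℝ) < β ^ q := Real.rpow_pos_of_pos hβ q
      rw [e1]
      rw [div_div_eq_mul_div, e2]
      rw [show R ^ q * 2 ^ q / β ^ q * β ^ (2:ℝ) = 2 ^ q * R ^ q * (β ^ (2:ℝ) / β ^ q) by ring,
        e3]
    calc S2 = ∑ j ∈ Fs, (A (j:ℕ) - t j) ^ 2 + ∑ j ∈ Fbig, (A (j:ℕ) - t j) ^ 2 := hsplit
      _ ≤ CB * R ^ q * (β / 2) ^ (2 - q) + (R ^ q / (β / 2) ^ q) * β ^ 2 := by
          rw [hsmall1, ← himgs]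
          exact add_le_add hsB hbig2
      _ = (CB * 2 ^ (q - 2) + 2 ^ q) * R ^ q * β ^ (2 - q) := by
          rw [hhalf2, hbig3]; ring
  have hS2leC : S2 ≤ C * R ^ q * β ^ (2 - q) := by
    refine le_trans hS2le ?_
    apply mul_le_mul_of_nonneg_right _ hβ2q.le
    apply mul_le_mul_of_nonneg_right _ hRq.le
    have h1 : 0 < 2 ^ q * CA := by positivity
    linarith
  -- assemble
  have hfinal : ‖f - ∑ j, t j • φ (j:ℕ)‖
      ≤ Real.sqrt (R ^ 2 * ((p:ℝ) + 1) ^ (-(2 * r))) + Real.sqrt (C * R ^ q * β ^ (2 - q)) := by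
    rw [← Real.sqrt_sq (norm_nonneg (f - ∑ j, t j • φ (j:ℕ))), hnorm2]
    calc Real.sqrt (T + S2) ≤ Real.sqrt T + Real.sqrt S2 := sqrt_add_le' hT0 hS20
      _ ≤ _ := add_le_add (Real.sqrt_le_sqrt hTle) (Real.sqrt_le_sqrt hS2leC)
  have hsq1 : Real.sqrt (R ^ 2 * ((p:ℝ) + 1) ^ (-(2 * r))) = R * ((p:ℝ) + 1) ^ (-r) := by
    rw [Real.sqrt_mul (sq_nonneg R)]
    congr 1
    · exact Real.sqrt_sq hR.le
    · have e : ((p:ℝ) + 1) ^ (-(2 * r)) = (((p:ℝ) + 1) ^ (-r)) ^ (2:ℕ) := by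
        rw [← Real.rpow_natCast (((p:ℝ) + 1) ^ (-r)) 2, ← Real.rpow_mul hppos.le]
        congr 1
        push_cast
        ring
      rw [e, Real.sqrt_sq (Real.rpow_nonneg hppos.le _)]
  have hsq2 : Real.sqrt (C * R ^ q * β ^ (2 - q))
      = Real.sqrt C * R ^ (q / 2) * β ^ (1 - q / 2) := by
    rw [Real.sqrt_mul (by positivity : (0:ℝ) ≤ C * R ^ q), Real.sqrt_mul hCpos.le]
    congr 1
    · congr 1
      have e : R ^ q = (R ^ (q / 2)) ^ (2:ℕ) := by
        rw [← Real.rpow_natCast (R ^ (q / 2)) 2, ← Real.rpow_mul hR.le]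
        congr 1
        push_cast
        ring
      rw [e, Real.sqrt_sq (Real.rpow_nonneg hR.le _)]
    · have e : β ^ (2 - q) = (β ^ (1 - q / 2)) ^ (2:ℕ) := by
        rw [← Real.rpow_natCast (β ^ (1 - q / 2)) 2, ← Real.rpow_mul hβ.le]
        congr 1
        push_cast
        ring
      rw [e, Real.sqrt_sq (Real.rpow_nonneg hβ.le _)]
  rw [hsq1, hsq2] at hfinal
  exact hfinal
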